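/- Let O be an octonion algebra over F with char F ≠ 2, and A a subalgebra with dim_F A > 4. Then A contains a 2-dimensional subalgebra B with 1 ∈ B such that the polar form of the norm restricted to B is nondegenerate (i.e., B is a 2-dimensional composition subalgebra). -/

import Mathlib

/-- If `char F ≠ 2` and `A` is a subalgebra of an octonion algebra with
`dim A > 4`, then `A` contains a 2-dimensional composition subalgebra `B` with `1 ∈ B`
on which the polar form is nondegenerate. -/
theorem stmt_18 (F : Type*) [Field F] (O : Type*) [NonAssocRing O] [Module F O]
    [SMulCommClass F O O] [IsScalarTower F O O]
    (q : QuadraticForm F O)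
    (hmul : ∀ x y : O, q (x * y) = q x * q y)
    (hnd : ∀ x : O, (∀ y : O, QuadraticMap.polar (⇑q) x y = 0) → x = 0)
    (hdim : Module.finrank F O = 8)
    (hchar : (2 : F) ≠ 0)
    (A : Submodule F O)
    (hA : ∀ x ∈ A, ∀ y ∈ A, x * y ∈ A)
    (hAdim : 4 < Module.finrank F A) :
    ∃ B : Submodule F O,
      B ≤ A ∧ (1 : O) ∈ B ∧
      Module.finrank F B = 2 ∧
      (∀ x ∈ B, ∀ y ∈ B, x * y ∈ B) ∧
      (∀ x ∈ B, (∀ y ∈ B, QuadraticMap.polar (⇑q) x y = 0) → x = 0) := by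
  classical
  set P : O → O → F := fun x y => QuadraticMap.polar (⇑q) x y with hP
  have hFD : FiniteDimensional F O := FiniteDimensional.of_finrank_pos (by omega)
  have hNT : Nontrivial O := Module.nontrivial_of_finrank_pos (R := F) (by omega)
  -- polar of q
  have hpolar_def : ∀ x y : O, P x y = q (x + y) - q x - q y := fun x y => rfl
  have hml : ∀ x y z : O, P (x * y) (x * z) = q x * P y z := by
    intro x y z
    simp only [hpolar_def, ← mul_add, hmul]
    ring
  have hmr : ∀ x y z : O, P (y * x) (z * x) = P y z * q x := by
    intro x y z
    simp only [hpolar_def, ← add_mul, hmul]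
    ring
  -- full linearization
  have hlin : ∀ x w y z : O, P (x * y) (w * z) + P (w * y) (x * z) = P x w * P y z := by
    intro x w y z
    have h1 := hml (x + w) y z
    have hL : P ((x + w) * y) ((x + w) * z)
        = P (x * y) (x * z) + P (x * y) (w * z) + (P (w * y) (x * z) + P (w * y) (w * z)) := by
      simp only [hP, add_mul, QuadraticMap.polar_add_left, QuadraticMap.polar_add_right]
      ring
    have h2 : q (x + w) = q x + q w + P x w := by rw [hpolar_def]; ring
    have h3 := hml x y z
    have h4 := hml w y z
    rw [hL, h2] at h1
    linear_combination h1 - h3 - h4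
  -- q 1 = 1
  have hq1 : q 1 = 1 := by
    by_contra h
    have hz : ∀ y z : O, P y z = 0 := by
      intro y z
      have := hml 1 y z
      simp only [one_mul] at this
      have h2 : (1 - q 1) * P y z = 0 := by linear_combination this
      rcases mul_eq_zero.mp h2 with h3 | h3
      · exact absurd (sub_eq_zero.mp h3).symm h
      · exact h3
    have : ∀ y : O, y = 0 := fun y => hnd y (fun z => hz y z)
    exact one_ne_zero (this 1)
  -- Cayley-Hamilton
  have hCH : ∀ x : O, x * x = P x 1 • x - q x • (1 : O) := by
    intro x
    have key : ∀ z : O, P (x * x - (P x 1 • x - q x • (1 : O))) z = 0 := by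
      intro z
      have h1 := hlin x 1 x z
      simp only [one_mul] at h1
      have h2 := hml x 1 z
      simp only [mul_one] at h2
      have hexp : P (x * x - (P x 1 • x - q x • (1 : O))) z
          = P (x * x) z - P x 1 * P x z + q x * P 1 z := by
        simp only [hP, QuadraticMap.polar_sub_left, QuadraticMap.polar_smul_left, smul_eq_mul]
        ring
      rw [hexp]
      linear_combination h1 - h2
    have := hnd _ key
    exact sub_eq_zero.mp this
  -- bilinear form machinery
  let Bl : LinearMap.BilinForm F O := q.polarBilin
  have hBlap : ∀ x y : O, Bl x y = P x y := fun x y => rfl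
  have hrefl : Bl.IsRefl := by
    intro x y h
    rw [hBlap] at h ⊢
    rw [hP] at h ⊢
    simpa [QuadraticMap.polar_comm] using h
  have hndB : Bl.Nondegenerate := by
    refine (LinearMap.IsRefl.nondegenerate_iff_separatingLeft hrefl).mpr ?_
    intro x hx
    exact hnd x (fun y => hx y)
  have horth : ∀ W : Submodule F O,
      Module.finrank F (Bl.orthogonal W)
        = 8 - Module.finrank F W := by
    intro W
    rw [LinearMap.BilinForm.finrank_orthogonal hndB W, hdim]
  -- a non-singular element of A
  have hexA : ∃ a ∈ A, q a ≠ 0 := by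
    by_contra h
    push_neg at h
    have hle : A ≤ Bl.orthogonal A := by
      intro x hx n hn
      show Bl n x = 0
      rw [hBlap, hpolar_def, h _ (A.add_mem hn hx), h _ hn, h _ hx]
      ring
    have h2 := Submodule.finrank_mono hle
    rw [horth A] at h2
    have h3 : Module.finrank F A ≤ Module.finrank F O := Submodule.finrank_le A
    rw [hdim] at h3
    omega
  obtain ⟨a, haA, haq⟩ := hexA
  -- 1 belongs to A
  have h1A : (1 : O) ∈ A := by
    have h2 : q a • (1 : O) = P a 1 • a - a * a := by rw [hCH a]; abel
    have h3 : (1 : O) = (q a)⁻¹ • (P a 1 • a - a * a) := by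
      rw [← h2, smul_smul, inv_mul_cancel₀ haq, one_smul]
    rw [h3]
    exact A.smul_mem _ (A.sub_mem (A.smul_mem _ haA) (hA a haA a haA))
  have hP11 : P 1 1 = 2 := by
    show QuadraticMap.polar (⇑q) 1 1 = 2
    rw [QuadraticMap.polar_self, hq1]
    norm_num
  -- the orthogonal complement of 1 intersected with A
  have h1ne : (1 : O) ≠ 0 := one_ne_zero
  have hS1rank : Module.finrank F (Submodule.span F {(1 : O)}) = 1 :=
    finrank_span_singleton h1ne
  set W : Submodule F O :=
    A ⊓ Bl.orthogonal (Submodule.span F {(1 : O)})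
    with hWdef
  have hWrank : 4 ≤ Module.finrank F W := by
    have h1 := Submodule.finrank_sup_add_finrank_inf_eq A
      (Bl.orthogonal (Submodule.span F {(1 : O)}))
    rw [← hWdef] at h1
    have h2 : Module.finrank F
        (A ⊔ Bl.orthogonal (Submodule.span F {(1 : O)}) : Submodule F O)
          ≤ Module.finrank F O := Submodule.finrank_le _
    rw [hdim] at h2
    have h3 := horth (Submodule.span F {(1 : O)})
    rw [hS1rank] at h3
    omega
  -- elements of W are orthogonal to 1
  have hWorth1 : ∀ x ∈ W, P 1 x = 0 := by
    intro x hx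
    have := hx.2 1 (Submodule.mem_span_singleton_self 1)
    rw [← hBlap]
    exact this
  -- a non-singular element of W
  have hexT : ∃ t ∈ W, q t ≠ 0 := by
    by_contra h
    push_neg at h
    have hWiso : ∀ x ∈ W, ∀ y ∈ W, P x y = 0 := by
      intro x hx y hy
      rw [hpolar_def, h _ (W.add_mem hx hy), h _ hx, h _ hy]
      ring
    have hsub : W ⊔ Submodule.span F {(1 : O)} ≤
        Bl.orthogonal W := by
      apply sup_le
      · intro x hx n hn
        show Bl n x = 0
        rw [hBlap]
        exact hWiso n hn x hx
      · intro x hx n hn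
        obtain ⟨c, hc⟩ := Submodule.mem_span_singleton.mp hx
        show Bl n x = 0
        have h0 : P 1 n = 0 := hWorth1 n hn
        rw [hBlap, ← hc]
        show QuadraticMap.polar (⇑q) n (c • (1:O)) = 0
        rw [QuadraticMap.polar_smul_right, smul_eq_mul]
        have : QuadraticMap.polar (⇑q) n 1 = 0 := by
          rw [QuadraticMap.polar_comm]; exact h0
        rw [this, mul_zero]
    have hWS1 : W ⊓ Submodule.span F {(1 : O)} = ⊥ := by
      rw [eq_bot_iff]
      intro x hx
      obtain ⟨c, hc⟩ := Submodule.mem_span_singleton.mp hx.2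
      have h0 : P 1 x = 0 := hWorth1 x hx.1
      rw [← hc] at h0
      have h0' : c * QuadraticMap.polar (⇑q) 1 1 = 0 := by
        have he : P 1 (c • (1 : O)) = c * QuadraticMap.polar (⇑q) 1 1 := by
          show QuadraticMap.polar (⇑q) 1 (c • (1 : O)) = _
          rw [QuadraticMap.polar_smul_right, smul_eq_mul]
        rw [← he]; exact h0
      have hc0 : c = 0 := by
        have h11 : QuadraticMap.polar (⇑q) 1 1 = 2 := hP11
        rw [h11] at h0'
        rcases mul_eq_zero.mp h0' with h | h
        · exact h
        · exact absurd h hchar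
      simp [← hc, hc0]
    have h5 : Module.finrank F (W ⊔ Submodule.span F {(1 : O)} : Submodule F O)
        = Module.finrank F W + 1 := by
      have h6 := Submodule.finrank_sup_add_finrank_inf_eq W (Submodule.span F {(1 : O)})
      rw [hWS1, finrank_bot, hS1rank] at h6
      omega
    have h7 := Submodule.finrank_mono hsub
    rw [horth W, h5] at h7
    omega
  obtain ⟨t, htW, htq⟩ := hexT
  have htA : t ∈ A := htW.1
  have hP1t : P 1 t = 0 := hWorth1 t htW
  have hPt1 : P t 1 = 0 := by
    show QuadraticMap.polar (⇑q) t 1 = 0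
    rw [QuadraticMap.polar_comm]
    exact hP1t
  have hPtt : P t t = 2 * q t := by
    show QuadraticMap.polar (⇑q) t t = 2 * q t
    rw [QuadraticMap.polar_self]
    rw [two_nsmul, two_mul]
  have htne : t ≠ 0 := by
    intro h
    apply htq
    rw [h, map_zero]
  -- the subalgebra B
  refine ⟨Submodule.span F {(1 : O), t}, ?_, ?_, ?_, ?_, ?_⟩
  · rw [Submodule.span_le]
    intro x hx
    rcases hx with h | h
    · rw [h]; exact h1A
    · rw [Set.mem_singleton_iff.mp h]; exact htA
  · exact Submodule.subset_span (Set.mem_insert _ _)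
  · have hli : LinearIndependent F ![(1 : O), t] := by
      rw [LinearIndependent.pair_iff]
      intro s r hsr
      have h1 : QuadraticMap.polar (⇑q) (s • (1 : O) + r • t) 1 = s * 2 := by
        rw [QuadraticMap.polar_add_left, QuadraticMap.polar_smul_left,
          QuadraticMap.polar_smul_left, smul_eq_mul, smul_eq_mul]
        have h11 : QuadraticMap.polar (⇑q) 1 1 = 2 := hP11
        have ht1 : QuadraticMap.polar (⇑q) t 1 = 0 := hPt1
        rw [h11, ht1]
        ring
      rw [hsr] at h1
      have h1' : QuadraticMap.polar (⇑q) (0:O) 1 = 0 := by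
        simp [QuadraticMap.polar]
      rw [h1'] at h1
      have hs : s = 0 := by
        rcases mul_eq_zero.mp h1.symm with h | h
        · exact h
        · exact absurd h hchar
      refine ⟨hs, ?_⟩
      rw [hs, zero_smul, zero_add] at hsr
      rcases smul_eq_zero.mp hsr with h | h
      · exact h
      · exact absurd h htne
    have hr : Set.range ![(1 : O), t] = {(1 : O), t} := by
      simp [Matrix.range_cons, Matrix.range_empty, Set.pair_comm]
    rw [← hr, finrank_span_eq_card hli, Fintype.card_fin]
  · -- multiplicative closure
    have h1B : (1 : O) ∈ Submodule.span F {(1 : O), t} := Submodule.subset_span (Set.mem_insert _ _)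
    have htB : t ∈ Submodule.span F {(1 : O), t} :=
      Submodule.subset_span (Set.mem_insert_of_mem _ rfl)
    have ht2 : t * t ∈ Submodule.span F {(1 : O), t} := by
      rw [hCH t, hPt1]
      exact Submodule.sub_mem _ (Submodule.smul_mem _ _ htB) (Submodule.smul_mem _ _ h1B)
    intro x hx y hy
    obtain ⟨a1, b1, rfl⟩ := Submodule.mem_span_pair.mp hx
    obtain ⟨c1, d1, rfl⟩ := Submodule.mem_span_pair.mp hy
    have hexp : (a1 • (1 : O) + b1 • t) * (c1 • (1 : O) + d1 • t)
        = (a1 * c1) • (1 : O) + (a1 * d1 + b1 * c1) • t + (b1 * d1) • (t * t) := by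
      simp only [mul_add, add_mul, smul_mul_assoc, mul_smul_comm, one_mul, mul_one, smul_smul]
      module
    rw [hexp]
    exact Submodule.add_mem _
      (Submodule.add_mem _ (Submodule.smul_mem _ _ h1B) (Submodule.smul_mem _ _ htB))
      (Submodule.smul_mem _ _ ht2)
  · -- nondegeneracy on B
    have h1B : (1 : O) ∈ Submodule.span F {(1 : O), t} := Submodule.subset_span (Set.mem_insert _ _)
    have htB : t ∈ Submodule.span F {(1 : O), t} :=
      Submodule.subset_span (Set.mem_insert_of_mem _ rfl)
    intro x hx hxy
    obtain ⟨a1, b1, rfl⟩ := Submodule.mem_span_pair.mp hx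
    have h1 := hxy 1 h1B
    have h2 := hxy t htB
    rw [QuadraticMap.polar_add_left, QuadraticMap.polar_smul_left,
      QuadraticMap.polar_smul_left, smul_eq_mul, smul_eq_mul] at h1 h2
    have h11 : QuadraticMap.polar (⇑q) 1 1 = 2 := hP11
    have ht1 : QuadraticMap.polar (⇑q) t 1 = 0 := hPt1
    have h1t : QuadraticMap.polar (⇑q) 1 t = 0 := hP1t
    have htt : QuadraticMap.polar (⇑q) t t = 2 * q t := hPtt
    rw [h11, ht1] at h1
    rw [h1t, htt] at h2
    have ha : a1 = 0 := by
      have h1' : a1 * 2 = 0 := by linear_combination h1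
      rcases mul_eq_zero.mp h1' with h | h
      · exact h
      · exact absurd h hchar
    have hb : b1 = 0 := by
      have h2' : b1 * (2 * q t) = 0 := by linear_combination h2
      rcases mul_eq_zero.mp h2' with h | h
      · exact h
      · rcases mul_eq_zero.mp h with h' | h'
        · exact absurd h' hchar
        · exact absurd h' htq
    rw [ha, hb, zero_smul, zero_smul, add_zero]
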